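/- Let n ≥ 2 and let (γ_j)_{j ∈ J} be a family of maps ℝⁿ ∖ {c_j} → ℝⁿ where each γ_j = A_j ∘ i_j with A_j a linear isometry of ℝⁿ and i_j the inversion in a sphere S(c_j, r_j) with r_j > 0 and ‖c_j‖² = 1 + r_j² (the sphere is orthogonal to the unit sphere). Suppose the map j ↦ γ_j(0) is injective and that the set {γ_j(0) : j ∈ J} has no accumulation point in the open unit ball {x : ‖x‖ < 1}. Then the family of radii (r_j) is bounded: sup_j r_j < ∞. -/
import Mathlib


/-- The inversion in the sphere `S(c, r)` in `ℝⁿ`: `i(x) = c + (r/‖x−c‖)² (x − c)`. -/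
noncomputable def sphereInversion {n : ℕ} (c : EuclideanSpace ℝ (Fin n)) (r : ℝ)
    (x : EuclideanSpace ℝ (Fin n)) : EuclideanSpace ℝ (Fin n) :=
  c + (r / ‖x - c‖) ^ 2 • (x - c)

lemma sphereInversion_zero_norm_sq {n : ℕ} (c : EuclideanSpace ℝ (Fin n)) (r : ℝ)
    (h : ‖c‖ ^ 2 = 1 + r ^ 2) :
    ‖sphereInversion c r 0‖ ^ 2 = 1 / (1 + r ^ 2) := by
  have h1 : (0:ℝ) < 1 + r ^ 2 := by positivity
  have hc : ‖c‖ ≠ 0 := by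
    intro h0
    rw [h0] at h
    nlinarith
  have hrw : sphereInversion c r 0 = (1 - r ^ 2 / ‖c‖ ^ 2) • c := by
    unfold sphereInversion
    rw [zero_sub, norm_neg, smul_neg, sub_smul, one_smul, div_pow]
    abel
  rw [hrw, norm_smul, mul_pow, Real.norm_eq_abs, sq_abs, h]
  field_simp
  ring

theorem radii_bounded_of_orbit_no_accumulation {n : ℕ} (hn : 2 ≤ n) {J : Type*}
    (A : J → (EuclideanSpace ℝ (Fin n) ≃ₗᵢ[ℝ] EuclideanSpace ℝ (Fin n)))
    (c : J → EuclideanSpace ℝ (Fin n)) (r : J → ℝ)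
    (hr : ∀ j, 0 < r j)
    (horth : ∀ j, ‖c j‖ ^ 2 = 1 + r j ^ 2)
    (hinj : Function.Injective fun j => A j (sphereInversion (c j) (r j) 0))
    (hacc : ∀ x : EuclideanSpace ℝ (Fin n), ‖x‖ < 1 →
      ¬ AccPt x (Filter.principal
        (Set.range fun j => A j (sphereInversion (c j) (r j) 0)))) :
    BddAbove (Set.range r) := by
  by_contra hb
  set g : J → EuclideanSpace ℝ (Fin n) := fun j => A j (sphereInversion (c j) (r j) 0) with hg
  -- norms of orbit points
  have hnorm : ∀ j, ‖g j‖ ^ 2 = 1 / (1 + r j ^ 2) := fun j => by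
    rw [hg]
    simp only [LinearIsometryEquiv.norm_map]
    exact sphereInversion_zero_norm_sq (c j) (r j) (horth j)
  -- the set of indices with big radius is infinite
  have hJ1 : {j : J | 1 < r j}.Infinite := by
    intro hfin
    apply hb
    obtain ⟨M, hM⟩ := (hfin.image r).bddAbove
    refine ⟨max M 1, ?_⟩
    rintro x ⟨j, rfl⟩
    by_cases h1 : 1 < r j
    · exact le_max_of_le_left (hM ⟨j, h1, rfl⟩)
    · exact le_max_of_le_right (not_lt.1 h1)
  have hsinf : (g '' {j : J | 1 < r j}).Infinite :=
    hJ1.image (Set.injOn_of_injective hinj)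
  have hsub : g '' {j : J | 1 < r j} ⊆ Metric.closedBall 0 (Real.sqrt (1/2)) := by
    rintro _ ⟨j, hj, rfl⟩
    rw [Metric.mem_closedBall, dist_zero_right]
    have h2 : ‖g j‖ ^ 2 ≤ 1 / 2 := by
      rw [hnorm j]
      rw [div_le_div_iff₀ (by positivity) (by norm_num)]
      have hj' : 1 < r j := hj
      nlinarith
    calc ‖g j‖ = Real.sqrt (‖g j‖ ^ 2) := by
          rw [Real.sqrt_sq (norm_nonneg _)]
      _ ≤ Real.sqrt (1/2) := Real.sqrt_le_sqrt h2
  obtain ⟨x, hxK, hx⟩ := hsinf.exists_accPt_of_subset_isCompact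
    (isCompact_closedBall 0 _) hsub
  have hxlt : ‖x‖ < 1 := by
    rw [Metric.mem_closedBall, dist_zero_right] at hxK
    calc ‖x‖ ≤ Real.sqrt (1/2) := hxK
      _ < 1 := by
        rw [show (1:ℝ) = Real.sqrt 1 by simp]
        exact Real.sqrt_lt_sqrt (by norm_num) (by norm_num)
  exact hacc x hxlt (hx.mono (Filter.principal_mono.2 (Set.image_subset_range _ _)))
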